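/- Let (A,{·,·,·}) be a 3-pre-Lie algebra over a field K of characteristic 0 and let R : A → A be a Rota-Baxter operator of weight 0 on A. Then the operations ↖(x,y,z) := {R(x),R(y),z} and ↗(x,y,z) := {x,R(y),R(z)} define a 3-L-dendriform algebra structure on A. -/

import Mathlib

universe u v w

variable (K : Type u) [Field K] [CharZero K]

section MultilinearDefs

variable {M₁ M₂ M₃ M₄ : Type*}
  [AddCommGroup M₁] [Module K M₁] [AddCommGroup M₂] [Module K M₂]
  [AddCommGroup M₃] [Module K M₃] [AddCommGroup M₄] [Module K M₄]

/-- A map `f : M₁ → M₂ → M₃ → M₄` which is `K`-linear in each of its three arguments. -/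
def IsTrilinearMap (f : M₁ → M₂ → M₃ → M₄) : Prop :=
  (∀ (c : K) (x x' : M₁) (y : M₂) (z : M₃), f (c • x + x') y z = c • f x y z + f x' y z) ∧
  (∀ (c : K) (x : M₁) (y y' : M₂) (z : M₃), f x (c • y + y') z = c • f x y z + f x y' z) ∧
  (∀ (c : K) (x : M₁) (y : M₂) (z z' : M₃), f x y (c • z + z') = c • f x y z + f x y z')

end MultilinearDefs

section Algebras

variable {A : Type*} [AddCommGroup A] [Module K A]
variable {V : Type*} [AddCommGroup V] [Module K V]

/-- The induced 3-commutator `[x,y,z]^C = {x,y,z} + {y,z,x} + {z,x,y}` of a ternary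
operation. -/
def preC (p : A → A → A → A) : A → A → A → A :=
  fun x y z => p x y z + p y z x + p z x y

/-- A (trilinear) bracket makes `A` a 3-Lie algebra: it is skew-symmetric (alternating)
and satisfies the fundamental identity. -/
def Is3Lie (br : A → A → A → A) : Prop :=
  IsTrilinearMap K br ∧
  (∀ x y z : A, br x y z = - br y x z) ∧
  (∀ x y z : A, br x y z = - br x z y) ∧
  (∀ x1 x2 x3 x4 x5 : A,
    br x1 x2 (br x3 x4 x5)
      = br (br x1 x2 x3) x4 x5 + br x3 (br x1 x2 x4) x5 + br x3 x4 (br x1 x2 x5))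

/-- A (trilinear) operation makes `A` a 3-pre-Lie algebra: (P0), (P1), (P2). -/
def Is3PreLie (p : A → A → A → A) : Prop :=
  IsTrilinearMap K p ∧
  (∀ x y z : A, p x y z = - p y x z) ∧
  (∀ x1 x2 x3 x4 x5 : A,
    p x1 x2 (p x3 x4 x5)
      = p (preC p x1 x2 x3) x4 x5 + p x3 (preC p x1 x2 x4) x5 + p x3 x4 (p x1 x2 x5)) ∧
  (∀ x1 x2 x3 x4 x5 : A,
    p (preC p x1 x2 x3) x4 x5
      = p x1 x2 (p x3 x4 x5) + p x2 x3 (p x1 x4 x5) + p x3 x1 (p x2 x4 x5))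

/-- `ρ` is a representation of the 3-Lie algebra `(A, br)` on `V`. -/
def Is3LieRep (br : A → A → A → A) (ρ : A → A → V → V) : Prop :=
  IsTrilinearMap K ρ ∧
  (∀ (x y : A) (v : V), ρ x y v = - ρ y x v) ∧
  (∀ (x1 x2 x3 x4 : A) (v : V),
    ρ x1 x2 (ρ x3 x4 v) - ρ x3 x4 (ρ x1 x2 v)
      = ρ (br x1 x2 x3) x4 v - ρ (br x1 x2 x4) x3 v) ∧
  (∀ (x1 x2 x3 x4 : A) (v : V),
    ρ (br x1 x2 x3) x4 v
      = ρ x1 x2 (ρ x3 x4 v) + ρ x2 x3 (ρ x1 x4 v) + ρ x3 x1 (ρ x2 x4 v))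

/-- `(l, r)` is a representation of the 3-pre-Lie algebra `(A, p)` on `V`:
`l` is skew-symmetric and a representation of the sub-adjacent 3-Lie algebra,
together with conditions (rep1)-(rep4), where `μ(x,y) = l(x,y) + r(x,y) - r(y,x)`. -/
def Is3PreLieRep (p : A → A → A → A) (l r : A → A → V → V) : Prop :=
  IsTrilinearMap K l ∧ IsTrilinearMap K r ∧
  Is3LieRep K (preC p) l ∧
  (∀ (x1 x2 x3 x4 : A) (v : V),
    l x1 x2 (r x3 x4 v)
      = r x3 x4 (l x1 x2 v + r x1 x2 v - r x2 x1 v)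
        + r (preC p x1 x2 x3) x4 v + r x3 (p x1 x2 x4) v) ∧
  (∀ (x1 x2 x3 x4 : A) (v : V),
    r (preC p x1 x2 x3) x4 v
      = l x1 x2 (r x3 x4 v) + l x2 x3 (r x1 x4 v) + l x3 x1 (r x2 x4 v)) ∧
  (∀ (x1 x2 x3 x4 : A) (v : V),
    r x1 (p x2 x3 x4) v
      = r x3 x4 (l x1 x2 v + r x1 x2 v - r x2 x1 v)
        - r x2 x4 (l x1 x3 v + r x1 x3 v - r x3 x1 v) + l x2 x3 (r x1 x4 v)) ∧
  (∀ (x1 x2 x3 x4 : A) (v : V),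
    r x3 x4 (l x1 x2 v + r x1 x2 v - r x2 x1 v)
      = l x1 x2 (r x3 x4 v) - r x2 (p x1 x3 x4) v + r x1 (p x2 x3 x4) v)

/-- `T : V → A` is an `𝒪`-operator on the 3-Lie algebra `(A, br)` associated to the
representation `ρ` of `A` on `V`. -/
def IsOOperator3Lie (br : A → A → A → A) (ρ : A → A → V → V) (T : V →ₗ[K] A) : Prop :=
  ∀ u v w : V,
    br (T u) (T v) (T w) = T (ρ (T u) (T v) w + ρ (T v) (T w) u + ρ (T w) (T u) v)

/-- `T : V → A` is an `𝒪`-operator on the 3-pre-Lie algebra `(A, p)` associated to the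
representation `(l, r)` of `A` on `V`. -/
def IsOOperator3PreLie (p : A → A → A → A) (l r : A → A → V → V) (T : V →ₗ[K] A) : Prop :=
  ∀ u v w : V,
    p (T u) (T v) (T w) = T (l (T u) (T v) w - r (T u) (T w) v + r (T v) (T w) u)

/-- `R : A → A` is a Rota-Baxter operator of weight 0 on the ternary algebra `(A, br)`. -/
def IsRotaBaxter3 (br : A → A → A → A) (R : A →ₗ[K] A) : Prop :=
  ∀ x y z : A,
    br (R x) (R y) (R z) = R (br (R x) (R y) z + br (R x) y (R z) + br x (R y) (R z))

/-- The horizontal operation `{x,y,z}^h = ↖(x,y,z) + ↗(x,y,z) - ↗(y,x,z)`. -/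
def hOp (nw ne : A → A → A → A) : A → A → A → A :=
  fun x y z => nw x y z + ne x y z - ne y x z

/-- The vertical operation `{x,y,z}^v = ↖(x,y,z) + ↗(z,x,y) - ↗(z,y,x)`. -/
def vOp (nw ne : A → A → A → A) : A → A → A → A :=
  fun x y z => nw x y z + ne z x y - ne z y x

/-- The bracket `[x,y,z]^C = {x,y,z}^h + {y,z,x}^h + {z,x,y}^h`. -/
def cOp (nw ne : A → A → A → A) : A → A → A → A :=
  fun x y z => hOp nw ne x y z + hOp nw ne y z x + hOp nw ne z x y

/-- `(A, nw, ne)` (with `nw = ↖`, `ne = ↗`) is a 3-L-dendriform algebra: axioms (L0)-(L6). -/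
def Is3LDendriform (nw ne : A → A → A → A) : Prop :=
  IsTrilinearMap K nw ∧ IsTrilinearMap K ne ∧
  (∀ x1 x2 x3 : A, nw x1 x2 x3 + nw x2 x1 x3 = 0) ∧
  (∀ x1 x2 x3 x4 x5 : A,
    nw x1 x2 (nw x3 x4 x5) - nw x3 x4 (nw x1 x2 x5)
      = nw (cOp nw ne x1 x2 x3) x4 x5 - nw (cOp nw ne x1 x2 x4) x3 x5) ∧
  (∀ x1 x2 x3 x4 x5 : A,
    nw x1 x2 (ne x5 x3 x4) - ne x5 x3 (hOp nw ne x1 x2 x4)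
      = ne x5 (cOp nw ne x1 x2 x3) x4 + ne (vOp nw ne x1 x2 x5) x3 x4) ∧
  (∀ x1 x2 x3 x4 x5 : A,
    ne x5 x1 (hOp nw ne x2 x3 x4) - nw x2 x3 (ne x5 x1 x4)
      = ne (vOp nw ne x1 x2 x5) x3 x4 - ne (vOp nw ne x1 x3 x5) x2 x4) ∧
  (∀ x1 x2 x3 x4 x5 : A,
    nw (cOp nw ne x1 x2 x3) x4 x5
      = nw x1 x2 (nw x3 x4 x5) + nw x2 x3 (nw x1 x4 x5) + nw x3 x1 (nw x2 x4 x5)) ∧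
  (∀ x1 x2 x3 x4 x5 : A,
    ne x5 (cOp nw ne x1 x2 x3) x4
      = nw x1 x2 (ne x5 x3 x4) + nw x2 x3 (ne x5 x1 x4) + nw x3 x1 (ne x5 x2 x4)) ∧
  (∀ x1 x2 x3 x4 x5 : A,
    nw x1 x2 (ne x5 x3 x4) + ne x5 x1 (hOp nw ne x2 x3 x4)
      = ne x5 x2 (hOp nw ne x1 x3 x4) + ne (vOp nw ne x1 x2 x5) x3 x4)

end Algebras


section Stmt15Aux

variable {B : Type v} [AddCommGroup B]
variable (p : B → B → B → B)
variable (hs : ∀ x y z : B, p x y z = - p y x z)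
variable (hn : ∀ x y z : B, p x y (-z) = - p x y z)
variable (h1 : ∀ x1 x2 x3 x4 x5 : B,
    p x1 x2 (p x3 x4 x5)
      = p (preC p x1 x2 x3) x4 x5 + p x3 (preC p x1 x2 x4) x5 + p x3 x4 (p x1 x2 x5))
variable (h2 : ∀ x1 x2 x3 x4 x5 : B,
    p (preC p x1 x2 x3) x4 x5
      = p x1 x2 (p x3 x4 x5) + p x2 x3 (p x1 x4 x5) + p x3 x1 (p x2 x4 x5))

include hs hn h2 in
lemma stmt15_keyU (a b c d e : B) :
    p e (preC p a b c) d = p a b (p e c d) + p b c (p e a d) + p c a (p e b d) := by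
  rw [hs e (preC p a b c) d, h2 a b c e d, hs c e d, hn, hs a e d, hn, hs b e d, hn]
  abel

include hs h1 h2 in
lemma stmt15_keyV (a b c d e : B) :
    p e (preC p a b c) d = - p e c (p a b d) + p e b (p a c d) - p e a (p b c d) := by
  have e1 := h1 a b e c d
  rw [h2 a b e c d, hs b e (p a c d)] at e1
  linear_combination (norm := abel) - e1

include hs h1 in
lemma stmt15_auxL1 (a b c d e : B) :
    p a b (p c d e) - p c d (p a b e) = p (preC p a b c) d e - p (preC p a b d) c e := by
  linear_combination (norm := abel) h1 a b c d e + hs c (preC p a b d) e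

include h1 in
lemma stmt15_auxL2 (a b c d e : B) :
    p a b (p e c d) - p e c (p a b d) = p e (preC p a b c) d + p (preC p a b e) c d := by
  linear_combination (norm := abel) h1 a b e c d

include hs hn h1 h2 in
lemma stmt15_auxL3 (a b c d e : B) :
    p e a (p b c d) - p b c (p e a d) = p (preC p a b e) c d - p (preC p a c e) b d := by
  have ecb : p e a (p c b d) = - p e a (p b c d) := by rw [hs c b d, hn]
  linear_combination (norm := abel)
    (- h2 a b e c d + h2 a c e b d + stmt15_keyU p hs hn h2 a b c d e
      - stmt15_keyV p hs h1 h2 a b c d e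
      + ecb - hs b e (p a c d) + hs c e (p a b d) + hs c a (p e b d))

include hs h2 in
lemma stmt15_auxL6 (a b c d e : B) :
    p a b (p e c d) + p e a (p b c d) = p e b (p a c d) + p (preC p a b e) c d := by
  linear_combination (norm := abel) - h2 a b e c d - hs b e (p a c d)

end Stmt15Aux

/-- A Rota-Baxter operator `R` of weight 0 on a 3-pre-Lie algebra induces a
3-L-dendriform structure `↖(x,y,z) = {R(x),R(y),z}`, `↗(x,y,z) = {x,R(y),R(z)}` on `A`. -/
theorem stmt15 {A : Type v} [AddCommGroup A] [Module K A]
    (p : A → A → A → A) (hp : Is3PreLie K p)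
    (R : A →ₗ[K] A)
    (hR : ∀ x y z : A,
      p (R x) (R y) (R z) = R (p (R x) (R y) z + p (R x) y (R z) + p x (R y) (R z))) :
    Is3LDendriform K (fun x y z => p (R x) (R y) z) (fun x y z => p x (R y) (R z)) := by
  obtain ⟨ht, hs, h1, h2⟩ := hp
  have h03 : ∀ x y : A, p x y 0 = 0 := by
    intro x y
    have h := ht.2.2 (1 : K) x y 0 0
    rw [smul_zero, add_zero, one_smul] at h
    exact (right_eq_add.mp h)
  have hn : ∀ x y z : A, p x y (-z) = - p x y z := by
    intro x y z
    have h := ht.2.2 (-1 : K) x y z 0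
    rw [add_zero, h03, add_zero, neg_one_smul, neg_one_smul] at h
    exact h
  have hRh : ∀ x y z : A,
      R (hOp (fun x y z => p (R x) (R y) z) (fun x y z => p x (R y) (R z)) x y z)
        = p (R x) (R y) (R z) := by
    intro x y z
    have e : R (hOp (fun x y z => p (R x) (R y) z) (fun x y z => p x (R y) (R z)) x y z)
        = R (p (R x) (R y) z + p (R x) y (R z) + p x (R y) (R z)) := by
      simp only [hOp]
      congr 1
      rw [hs y (R x) (R z)]
      abel
    rw [e]
    exact (hR x y z).symm
  have hRc : ∀ x y z : A,
      R (cOp (fun x y z => p (R x) (R y) z) (fun x y z => p x (R y) (R z)) x y z)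
        = preC p (R x) (R y) (R z) := by
    intro x y z
    simp only [cOp, map_add]
    rw [hRh x y z, hRh y z x, hRh z x y]
    rfl
  have hV : ∀ x y z : A,
      vOp (fun x y z => p (R x) (R y) z) (fun x y z => p x (R y) (R z)) x y z
        = preC p (R x) (R y) z := by
    intro x y z
    simp only [vOp, preC]
    rw [hs (R y) z (R x)]
    abel
  refine ⟨⟨fun c x x' y z => ?_, fun c x y y' z => ?_, fun c x y z z' => ?_⟩,
    ⟨fun c x x' y z => ?_, fun c x y y' z => ?_, fun c x y z z' => ?_⟩,
    fun x1 x2 x3 => ?_, fun x1 x2 x3 x4 x5 => ?_, fun x1 x2 x3 x4 x5 => ?_,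
    fun x1 x2 x3 x4 x5 => ?_, fun x1 x2 x3 x4 x5 => ?_, fun x1 x2 x3 x4 x5 => ?_,
    fun x1 x2 x3 x4 x5 => ?_⟩
  · show p (R (c • x + x')) (R y) z = c • p (R x) (R y) z + p (R x') (R y) z
    rw [map_add, map_smul]; exact ht.1 c (R x) (R x') (R y) z
  · show p (R x) (R (c • y + y')) z = c • p (R x) (R y) z + p (R x) (R y') z
    rw [map_add, map_smul]; exact ht.2.1 c (R x) (R y) (R y') z
  · show p (R x) (R y) (c • z + z') = c • p (R x) (R y) z + p (R x) (R y) z'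
    exact ht.2.2 c (R x) (R y) z z'
  · show p (c • x + x') (R y) (R z) = c • p x (R y) (R z) + p x' (R y) (R z)
    exact ht.1 c x x' (R y) (R z)
  · show p x (R (c • y + y')) (R z) = c • p x (R y) (R z) + p x (R y') (R z)
    rw [map_add, map_smul]; exact ht.2.1 c x (R y) (R y') (R z)
  · show p x (R y) (R (c • z + z')) = c • p x (R y) (R z) + p x (R y) (R z')
    rw [map_add, map_smul]; exact ht.2.2 c x (R y) (R z) (R z')
  · -- L0
    show p (R x1) (R x2) x3 + p (R x2) (R x1) x3 = 0
    rw [hs (R x1) (R x2) x3]; abel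
  · -- L1
    beta_reduce
    rw [hRc x1 x2 x3, hRc x1 x2 x4]
    exact stmt15_auxL1 p hs h1 (R x1) (R x2) (R x3) (R x4) x5
  · -- L2
    beta_reduce
    rw [hRh x1 x2 x4, hRc x1 x2 x3, hV x1 x2 x5]
    exact stmt15_auxL2 p h1 (R x1) (R x2) (R x3) (R x4) x5
  · -- L3
    beta_reduce
    rw [hRh x2 x3 x4, hV x1 x2 x5, hV x1 x3 x5]
    exact stmt15_auxL3 p hs hn h1 h2 (R x1) (R x2) (R x3) (R x4) x5
  · -- L4
    beta_reduce
    rw [hRc x1 x2 x3]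
    exact h2 (R x1) (R x2) (R x3) (R x4) x5
  · -- L5
    beta_reduce
    rw [hRc x1 x2 x3]
    exact stmt15_keyU p hs hn h2 (R x1) (R x2) (R x3) (R x4) x5
  · -- L6
    beta_reduce
    rw [hRh x2 x3 x4, hRh x1 x3 x4, hV x1 x2 x5]
    exact stmt15_auxL6 p hs h2 (R x1) (R x2) (R x3) (R x4) x5
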